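/- Let m ∈ ℕ and let T₁,...,T_N ∈ L(E) be such that every product T_{i₁}⋯T_{i_{m+1}} of m+1 of them (with repetitions allowed) equals 0. Then there exists an orthogonal decomposition E = E₁ ⊕ ⋯ ⊕ E_{m+1} such that each T_k is strictly lower block-triangular with respect to it: T_k E_j ⊆ E_{j+1} ⊕ ⋯ ⊕ E_{m+1} for 1 ≤ j ≤ m, and T_k E_{m+1} = {0}. -/

import Mathlib

open scoped InnerProductSpace

set_option linter.unusedSectionVars false

section Aux

variable {Hs : Type*} [NormedAddCommGroup Hs] [InnerProductSpace ℂ Hs]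
    [CompleteSpace Hs] {N : ℕ}

/-- Closure of the span of all ranges `T^w E` with `|w| = n`. -/
noncomputable def auxV (T : Fin N → Hs →L[ℂ] Hs) (n : ℕ) : Submodule ℂ Hs :=
  (⨆ w : {w : FreeMonoid (Fin N) // w.length = n},
    LinearMap.range (FreeMonoid.lift T w.1).toLinearMap).topologicalClosure

theorem auxV_isClosed (T : Fin N → Hs →L[ℂ] Hs) (n : ℕ) :
    IsClosed ((auxV T n : Submodule ℂ Hs) : Set Hs) :=
  Submodule.isClosed_topologicalClosure _

theorem auxV_zero (T : Fin N → Hs →L[ℂ] Hs) : auxV T 0 = ⊤ := by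
  rw [eq_top_iff]
  refine le_trans ?_ (Submodule.le_topologicalClosure _)
  refine le_trans ?_ (le_iSup _ (⟨1, rfl⟩ : {w : FreeMonoid (Fin N) // w.length = 0}))
  intro x _
  exact ⟨x, by simp⟩

theorem auxV_antitone (T : Fin N → Hs →L[ℂ] Hs) (n : ℕ) : auxV T (n + 1) ≤ auxV T n := by
  refine Submodule.topologicalClosure_mono (iSup_le fun w => ?_)
  show LinearMap.range (FreeMonoid.lift T w.1).toLinearMap ≤ _
  set x : FreeMonoid (Fin N) := FreeMonoid.ofList (w.1.toList.take n)
  set y : FreeMonoid (Fin N) := FreeMonoid.ofList (w.1.toList.drop n)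
  have hxy : w.1 = x * y := by
    rw [← FreeMonoid.ofList_append, List.take_append_drop, FreeMonoid.ofList_toList]
  have hx : x.length = n := by
    show (w.1.toList.take n).length = n
    rw [List.length_take]
    have : w.1.toList.length = n + 1 := w.2
    omega
  refine le_trans ?_ (le_iSup _ (⟨x, hx⟩ : {w : FreeMonoid (Fin N) // w.length = n}))
  rintro _ ⟨v, rfl⟩
  exact ⟨FreeMonoid.lift T y v, by simp [hxy, map_mul, ContinuousLinearMap.mul_apply]⟩

theorem auxV_map (T : Fin N → Hs →L[ℂ] Hs) (k : Fin N) (n : ℕ) :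
    (auxV T n).map (T k).toLinearMap ≤ auxV T (n + 1) := by
  rw [Submodule.map_le_iff_le_comap]
  refine Submodule.topologicalClosure_minimal _ ?_ ?_
  · rw [← Submodule.map_le_iff_le_comap, Submodule.map_iSup]
    refine iSup_le fun w => ?_
    have hlen : (FreeMonoid.of k * w.1).length = n + 1 := by
      simp [FreeMonoid.length_mul, w.2, FreeMonoid.length_of]; omega
    refine le_trans ?_ (Submodule.le_topologicalClosure _)
    refine le_trans ?_
      (le_iSup _ (⟨FreeMonoid.of k * w.1, hlen⟩ : {w : FreeMonoid (Fin N) // w.length = n + 1}))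
    rintro _ ⟨_, ⟨v, rfl⟩, rfl⟩
    exact ⟨v, by simp [map_mul, ContinuousLinearMap.mul_apply]⟩
  · exact (auxV_isClosed T (n + 1)).preimage (T k).continuous

theorem auxV_top (T : Fin N → Hs →L[ℂ] Hs) {m : ℕ}
    (hnil : ∀ w : FreeMonoid (Fin N), w.length = m + 1 → FreeMonoid.lift T w = 0) :
    auxV T (m + 1) = ⊥ := by
  rw [eq_bot_iff]
  refine Submodule.topologicalClosure_minimal _ (iSup_le fun w => ?_) (by rw [Submodule.bot_coe]; exact isClosed_singleton)
  · rw [hnil w.1 w.2]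
    rintro _ ⟨v, rfl⟩
    simp

end Aux

/-- If every product of `m+1` of the operators `T_1, …, T_N ∈ L(E)` (with
repetitions) vanishes, then there is an orthogonal decomposition
`E = E_1 ⊕ ⋯ ⊕ E_{m+1}` into closed mutually orthogonal subspaces with respect
to which every `T_k` is strictly lower block-triangular:
`T_k E_j ⊆ ⨆_{j' > j} E_{j'}` (so in particular `T_k E_{m+1} = 0`). -/
theorem stmt14 {Hs : Type*} [NormedAddCommGroup Hs] [InnerProductSpace ℂ Hs]
    [CompleteSpace Hs] {N m : ℕ} (T : Fin N → Hs →L[ℂ] Hs)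
    (hnil : ∀ w : FreeMonoid (Fin N), w.length = m + 1 → FreeMonoid.lift T w = 0) :
    ∃ E : Fin (m + 1) → Submodule ℂ Hs,
      (∀ j, IsClosed (E j : Set Hs)) ∧
      (∀ i j, i ≠ j → ∀ x ∈ E i, ∀ y ∈ E j, ⟪x, y⟫_ℂ = 0) ∧
      (⨆ j, E j = ⊤) ∧
      (∀ k j, (E j).map (T k).toLinearMap ≤ ⨆ j' > j, E j') := by
  set V : ℕ → Submodule ℂ Hs := auxV T with hV
  set E : Fin (m + 1) → Submodule ℂ Hs :=
    fun j => V j.1 ⊓ (V (j.1 + 1))ᗮ with hE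
  have hEclosed : ∀ j, IsClosed ((E j : Submodule ℂ Hs) : Set Hs) := fun j => by
    rw [hE]
    exact (auxV_isClosed T j.1).inter (Submodule.isClosed_orthogonal _)
  -- key decomposition
  have hkey : ∀ n : ℕ, n ≤ m + 1 → V n = ⨆ j : Fin (m + 1), ⨆ _ : n ≤ (j : ℕ), E j := by
    intro n hn
    induction' hd : (m + 1 - n) with d ih generalizing n
    · have hn' : n = m + 1 := by omega
      subst hn'
      rw [hV, auxV_top T hnil, eq_comm, eq_bot_iff]
      refine iSup_le fun j => iSup_le fun hj => absurd hj (by omega)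
    · have hnm : n ≤ m := by omega
      haveI : CompleteSpace (V (n + 1)) := (auxV_isClosed T (n + 1)).completeSpace_coe
      have hdec : V (n + 1) ⊔ (V (n + 1))ᗮ ⊓ V n = V n :=
        Submodule.sup_orthogonal_inf_of_hasOrthogonalProjection (auxV_antitone T n)
      have hrec : V (n + 1) = ⨆ j : Fin (m + 1), ⨆ _ : n + 1 ≤ (j : ℕ), E j :=
        ih (n + 1) (by omega) (by omega)
      rw [← hdec]
      apply le_antisymm
      · apply sup_le
        · rw [hrec]
          refine iSup_le fun j => iSup_le fun hj => ?_
          exact le_iSup₂ (f := fun (j : Fin (m + 1)) (_ : n ≤ (j : ℕ)) => E j) j (by omega)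
        · have h2 : (V (n + 1))ᗮ ⊓ V n ≤ E ⟨n, by omega⟩ := le_inf inf_le_right inf_le_left
          exact le_trans h2
            (le_iSup₂ (f := fun (j : Fin (m + 1)) (_ : n ≤ (j : ℕ)) => E j) ⟨n, by omega⟩
              (le_refl n))
      · refine iSup_le fun j => iSup_le fun hj => ?_
        rcases eq_or_lt_of_le hj with h | h
        · have hj' : j = ⟨n, by omega⟩ := by
            apply Fin.ext; simp [← h]
          refine le_sup_of_le_right ?_
          rw [hj']
          exact le_inf inf_le_right inf_le_left
        · refine le_sup_of_le_left ?_
          rw [hrec]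
          exact le_iSup₂ (f := fun (j : Fin (m + 1)) (_ : n + 1 ≤ (j : ℕ)) => E j) j (by omega)
  refine ⟨E, hEclosed, ?_, ?_, ?_⟩
  · -- orthogonality
    have horth : ∀ i j : Fin (m + 1), i < j → ∀ x ∈ E i, ∀ y ∈ E j, ⟪x, y⟫_ℂ = 0 := by
      intro i j hij x hx y hy
      have hx' : x ∈ (V (i.1 + 1))ᗮ := hx.2
      have hy' : y ∈ V (i.1 + 1) := by
        have : E j ≤ ⨆ j' : Fin (m + 1), ⨆ _ : i.1 + 1 ≤ (j' : ℕ), E j' :=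
          le_iSup₂ (f := fun (j' : Fin (m + 1)) (_ : i.1 + 1 ≤ (j' : ℕ)) => E j') j hij
        rw [← hkey (i.1 + 1) (by omega)] at this
        exact this hy
      exact (Submodule.mem_orthogonal' _ _).1 hx' y hy'
    intro i j hij x hx y hy
    rcases lt_or_gt_of_ne hij with h | h
    · exact horth i j h x hx y hy
    · rw [← inner_conj_symm, horth j i h y hy x hx, map_zero]
  · -- spanning
    have := hkey 0 (by omega)
    rw [hV, auxV_zero T] at this
    rw [eq_top_iff, this]
    exact iSup_le fun j => iSup_le fun _ => le_iSup _ j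
  · -- triangularity
    intro k j
    have h1 : (E j).map (T k).toLinearMap ≤ V (j.1 + 1) := by
      refine le_trans (Submodule.map_mono ?_) (auxV_map T k j.1)
      exact inf_le_left
    rcases Nat.lt_or_ge (j.1 + 1) (m + 2) with h | h
    · refine le_trans h1 ?_
      rw [hkey (j.1 + 1) (by omega)]
      refine iSup_le fun j' => iSup_le fun hj' => ?_
      exact le_iSup₂ (f := fun (j' : Fin (m + 1)) (_ : j < j') => E j') j' hj'
    · omega
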